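/- Let f : ℝ → ℝ be bounded with |f(ξ)| ≤ C̃₁ e^{−C̃₂|ξ|} for all ξ, and let p : ℝ → ℝ. Suppose |p| ≤ Kε² for small ε > 0. Then there exists C > 0 (depending only on C̃₁, C̃₂, K) such that sup_{ξ∈ℝ} |f(εξ)(e^{ipξ} − 1)| ≤ C ε |log ε| for all sufficiently small ε ∈ (0,1). -/

import Mathlib

lemma exp_I_sub_one_le_abs (θ : ℝ) :
    ‖Complex.exp (Complex.I * θ) - 1‖ ≤ |θ| := by
  have h1 : Complex.exp (Complex.I * θ) - 1
      = Complex.ofReal (Real.cos θ - 1) + Complex.ofReal (Real.sin θ) * Complex.I := by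
    rw [mul_comm, Complex.exp_mul_I]
    push_cast [Complex.ofReal_cos, Complex.ofReal_sin]
    ring
  rw [h1, Complex.norm_add_mul_I]
  have h2 : (Real.cos θ - 1) ^ 2 + Real.sin θ ^ 2 ≤ θ ^ 2 := by
    nlinarith [Real.one_sub_sq_div_two_le_cos (x := θ), Real.sin_sq_add_cos_sq θ,
      Real.cos_le_one θ]
  calc Real.sqrt ((Real.cos θ - 1) ^ 2 + Real.sin θ ^ 2) ≤ Real.sqrt (θ ^ 2) :=
        Real.sqrt_le_sqrt h2
    _ = |θ| := Real.sqrt_sq_eq_abs θ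

lemma exp_I_sub_one_le_two (θ : ℝ) :
    ‖Complex.exp (Complex.I * θ) - 1‖ ≤ 2 := by
  calc ‖Complex.exp (Complex.I * θ) - 1‖
      ≤ ‖Complex.exp (Complex.I * θ)‖ + ‖(1:ℂ)‖ :=
        norm_sub_le _ _
    _ ≤ 2 := by
        rw [mul_comm, Complex.norm_exp_ofReal_mul_I]
        norm_num

theorem stmt_15 (f : ℝ → ℝ) (C₁ C₂ K : ℝ) (hC₁ : 0 < C₁) (hC₂ : 0 < C₂) (hK : 0 < K)
    (hf : ∀ ξ : ℝ, |f ξ| ≤ C₁ * Real.exp (-C₂ * |ξ|)) :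
    ∃ C > 0, ∃ ε₀ ∈ Set.Ioo (0:ℝ) 1, ∀ ε : ℝ, 0 < ε → ε < ε₀ →
      ∀ p : ℝ, |p| ≤ K * ε^2 → ∀ ξ : ℝ,
        ‖(f (ε * ξ) : ℂ) * (Complex.exp (Complex.I * (p * ξ : ℝ)) - 1)‖ ≤
          C * ε * |Real.log ε| := by
  refine ⟨2 * C₁ * (K / C₂ + 1), by positivity, Real.exp (-1), ⟨Real.exp_pos _,
    by rw [← Real.exp_zero]; exact Real.exp_lt_exp.2 (by norm_num)⟩, ?_⟩
  intro ε hε hεe p hp ξ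
  have hε1 : ε < 1 := lt_trans hεe (by rw [← Real.exp_zero]; exact Real.exp_lt_exp.2 (by norm_num))
  have hlog : Real.log ε < -1 := by
    have := Real.log_lt_log hε hεe
    rwa [Real.log_exp] at this
  have hL : |Real.log ε| = -Real.log ε := abs_of_neg (by linarith)
  have hL1 : 1 ≤ |Real.log ε| := by rw [hL]; linarith
  set L := |Real.log ε| with hLdef
  have hfb : ∀ x : ℝ, |f x| ≤ C₁ := fun x => (hf x).trans (by
    have : Real.exp (-C₂ * |x|) ≤ 1 := Real.exp_le_one_iff.2 (by
      have := abs_nonneg x; nlinarith)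
    nlinarith)
  rw [norm_mul]
  rcases le_or_gt (|ξ|) ((2 / C₂) * L / ε) with hcase | hcase
  · -- inner region
    have h1 : ‖(f (ε * ξ) : ℂ)‖ ≤ C₁ := by
      rw [Complex.norm_real, Real.norm_eq_abs]; exact hfb _
    have h2 : ‖Complex.exp (Complex.I * (p * ξ : ℝ)) - 1‖ ≤ |p * ξ| :=
      exp_I_sub_one_le_abs _
    have h3 : |p * ξ| ≤ K * ε ^ 2 * ((2 / C₂) * L / ε) := by
      rw [abs_mul]
      have hpn : 0 ≤ |p| := abs_nonneg p
      have : 0 ≤ K * ε ^ 2 := by positivity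
      exact mul_le_mul hp hcase (abs_nonneg ξ) this
    have h4 : K * ε ^ 2 * ((2 / C₂) * L / ε) = 2 * (K / C₂) * ε * L := by
      field_simp
    calc ‖(f (ε * ξ) : ℂ)‖ * ‖Complex.exp (Complex.I * (p * ξ : ℝ)) - 1‖
        ≤ C₁ * (K * ε ^ 2 * ((2 / C₂) * L / ε)) := by
          apply mul_le_mul h1 (h2.trans h3) (norm_nonneg _) hC₁.le
      _ = 2 * C₁ * (K / C₂) * ε * L := by rw [h4]; ring
      _ ≤ 2 * C₁ * (K / C₂ + 1) * ε * L := by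
          have : 0 ≤ ε * L := by positivity
          nlinarith
  · -- outer region
    have h1 : ‖(f (ε * ξ) : ℂ)‖ ≤ C₁ * ε ^ 2 := by
      rw [Complex.norm_real, Real.norm_eq_abs]
      refine (hf _).trans ?_
      have hx : (2 / C₂) * L ≤ |ε * ξ| := by
        rw [abs_mul, abs_of_pos hε]
        calc (2 / C₂) * L = ε * ((2 / C₂) * L / ε) := by field_simp
          _ ≤ ε * |ξ| := by exact mul_le_mul_of_nonneg_left hcase.le hε.le
      have hexp : Real.exp (-C₂ * |ε * ξ|) ≤ Real.exp (-(2 * L)) := by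
        apply Real.exp_le_exp.2
        have h5 : C₂ * ((2 / C₂) * L) ≤ C₂ * |ε * ξ| := mul_le_mul_of_nonneg_left hx hC₂.le
        have h6 : C₂ * ((2 / C₂) * L) = 2 * L := by field_simp
        linarith
      have hval : Real.exp (-(2 * L)) = ε ^ 2 := by
        rw [hL]
        rw [show -(2 * -Real.log ε) = 2 * Real.log ε by ring]
        rw [show (2:ℝ) * Real.log ε = Real.log ε + Real.log ε by ring, Real.exp_add,
          Real.exp_log hε]
        ring
      calc C₁ * Real.exp (-C₂ * |ε * ξ|) ≤ C₁ * Real.exp (-(2 * L)) :=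
            mul_le_mul_of_nonneg_left hexp hC₁.le
        _ = C₁ * ε ^ 2 := by rw [hval]
    have h2 : ‖Complex.exp (Complex.I * (p * ξ : ℝ)) - 1‖ ≤ 2 :=
      exp_I_sub_one_le_two _
    calc ‖(f (ε * ξ) : ℂ)‖ * ‖Complex.exp (Complex.I * (p * ξ : ℝ)) - 1‖
        ≤ (C₁ * ε ^ 2) * 2 := mul_le_mul h1 h2 (norm_nonneg _) (by positivity)
      _ = 2 * C₁ * ε * ε := by ring
      _ ≤ 2 * C₁ * ε * L := by
          have h9 : ε ≤ L := le_trans hε1.le hL1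
          gcongr
      _ = 2 * C₁ * ε * L * 1 := by ring
      _ ≤ 2 * C₁ * ε * L * (K / C₂ + 1) := by
          have h8 : 0 ≤ K / C₂ := by positivity
          have h9 : (0:ℝ) ≤ 2 * C₁ * ε * L := by positivity
          nlinarith
      _ = 2 * C₁ * (K / C₂ + 1) * ε * L := by ring
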